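/- Let K be a number field of degree n over ℚ, let p be a rational prime, and let 𝔭 be a prime ideal of O_K lying above p with ramification index e(𝔭|p) = n (totally ramified, residue degree 1). Then the image of the unit group O_K^× under the reduction map O_K → O_K/𝔭 has cardinality at most 2n. Consequently, for any α ∈ O_K and any generator π of 𝔭 (if 𝔭 = (π) is principal), the orbit {ε·(α/π) + O_K : ε ∈ O_K^×} ⊆ K/O_K has at most 2n elements. -/

import Mathlib

open NumberField


open Polynomial Matrix in
private lemma det_aux_stmt12 {F : Type*} [Field F] {ι : Type*} [Fintype ι] [DecidableEq ι]
    (c : F) (N : Matrix ι ι F) (hN : IsNilpotent N) :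
    (c • (1 : Matrix ι ι F) + N).det = c ^ Fintype.card ι := by
  have h1 : (-N).charpoly = X ^ Fintype.card ι := by
    rw [← sub_eq_zero]
    exact (Matrix.isNilpotent_charpoly_sub_pow_of_isNilpotent hN.neg).eq_zero
  have h2 := congrArg (Polynomial.eval c) h1
  rw [Polynomial.eval_pow, Polynomial.eval_X, Matrix.charpoly, ← Polynomial.coe_evalRingHom,
    RingHom.map_det] at h2
  have h4 : (charmatrix (-N)).map (Polynomial.evalRingHom c) = c • 1 + N := by
    ext i j
    by_cases h : i = j
    · subst h
      simp [charmatrix_apply_eq]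
    · simp [charmatrix_apply_ne _ _ _ h, Matrix.one_apply_ne h]
  rwa [RingHom.mapMatrix_apply, h4] at h2

set_option maxHeartbeats 800000 in
private lemma key_aux_stmt12 {S : Type*} [CommRing S] [IsDomain S]
    [Module.Free ℤ S] [Module.Finite ℤ S] (p : ℕ) (hp : p.Prime) (x : S) (c : ℤ)
    (hmem : ∃ w : S, w * ((p : ℕ) : S) = (x - (c : S)) ^ (Module.finrank ℤ S)) :
    ((Algebra.norm ℤ x : ℤ) : ZMod p) = (c : ZMod p) ^ (Module.finrank ℤ S) := by
  classical
  haveI : Fact p.Prime := ⟨hp⟩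
  obtain ⟨w, hw⟩ := hmem
  set ι := Module.Free.ChooseBasisIndex ℤ S with hι
  let b : Module.Basis ι ℤ S := Module.Free.chooseBasis ℤ S
  have hcι : Fintype.card ι = Module.finrank ℤ S :=
    (Module.finrank_eq_card_chooseBasisIndex ℤ S).symm
  set f : Matrix ι ι ℤ →+* Matrix ι ι (ZMod p) := (Int.castRingHom (ZMod p)).mapMatrix with hf
  have hscal : ∀ d : ℤ, f (Algebra.leftMulMatrix b ((d : S))) = ((d : ZMod p)) • 1 := by
    intro d
    have h1 : Algebra.leftMulMatrix b ((d : S)) = ((d : ℤ) : Matrix ι ι ℤ) := by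
      rw [show ((d : ℤ) : S) = algebraMap ℤ S d by simp, AlgHom.commutes, eq_intCast]
    rw [h1, map_intCast, ← Matrix.diagonal_intCast (n := ι)]
    ext i j
    by_cases h : i = j
    · subst h; simp [Matrix.diagonal_apply_eq]
    · simp [Matrix.diagonal_apply_ne _ h, Matrix.one_apply_ne h]
  set N : Matrix ι ι (ZMod p) := f (Algebra.leftMulMatrix b (x - (c : S))) with hNdef
  have hNnil : N ^ (Module.finrank ℤ S) = 0 := by
    rw [hNdef]
    rw [← map_pow, ← map_pow, ← hw, map_mul, map_mul,
      show ((p : ℕ) : S) = (((p : ℕ) : ℤ) : S) by simp, hscal]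
    simp [ZMod.natCast_self]
  have hdec : f (Algebra.leftMulMatrix b x)
      = ((c : ZMod p)) • 1 + N := by
    rw [hNdef]
    rw [← hscal c, ← map_add, ← map_add]
    congr 2
    ring
  have hdet : (f (Algebra.leftMulMatrix b x)).det = ((c : ZMod p)) ^ (Module.finrank ℤ S) := by
    rw [hdec, det_aux_stmt12 ((c : ZMod p)) N ⟨Module.finrank ℤ S, hNnil⟩, hcι]
  rw [hf, ← RingHom.map_det, ← Algebra.norm_eq_matrix_det b x] at hdet
  exact_mod_cast hdet

set_option maxHeartbeats 1600000 in
set_option synthInstance.maxHeartbeats 400000 in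
theorem stmt_12 (K : Type*) [Field K] [NumberField K]
    (n : ℕ) (hn : n = Module.finrank ℚ K)
    (p : ℕ) (hp : p.Prime)
    (P : Ideal (𝓞 K)) (hP : P.IsPrime) (hPp : (p : 𝓞 K) ∈ P)
    (he : Ideal.ramificationIdx' (Ideal.span {(p : ℤ)}) P = n) :
    Nat.card (Set.range (fun ε : (𝓞 K)ˣ => Ideal.Quotient.mk P (ε : 𝓞 K))) ≤ 2 * n ∧
    ∀ (α π : 𝓞 K), Ideal.span {π} = P →
      Nat.card {c : K ⧸ ((algebraMap (𝓞 K) K).toAddMonoidHom.range) |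
        ∃ ε : (𝓞 K)ˣ, c = QuotientAddGroup.mk ((ε : K) * ((α : K) / (π : K)))}
        ≤ 2 * n := by
  classical
  have hn0 : 0 < n := hn ▸ Module.finrank_pos
  -- p O_K ≤ P ^ n
  have hspan : Ideal.span {(p : (𝓞 K))} ≤ P ^ n := by
    have h := Ideal.le_pow_ramificationIdx' (R := ℤ) (S := 𝓞 K)
      (p := Ideal.span {(p : ℤ)}) (P := P)
    rw [he] at h
    refine le_trans ?_ h
    rw [Ideal.span_le]
    intro y hy
    simp only [Set.mem_singleton_iff] at hy
    subst hy
    have h2 : algebraMap ℤ (𝓞 K) ((p : ℕ) : ℤ) ∈ Ideal.map (algebraMap ℤ (𝓞 K)) (Ideal.span {(p : ℤ)}) :=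
      Ideal.mem_map_of_mem _ (Ideal.mem_span_singleton_self _)
    simpa using h2
  have hrank : Module.finrank ℤ (𝓞 K) = n := by
    rw [NumberField.RingOfIntegers.rank, ← hn]
  let b := Module.Free.chooseBasis ℤ (𝓞 K)
  have hcι : Fintype.card (Module.Free.ChooseBasisIndex ℤ (𝓞 K)) = n := by
    rw [← Module.finrank_eq_card_chooseBasisIndex, hrank]
  -- absNorm computations
  have habs_p : Ideal.absNorm (Ideal.span {(p : (𝓞 K))}) = p ^ n := by
    rw [Ideal.absNorm_span_singleton]
    have h1 : ((p : ℕ) : (𝓞 K)) = algebraMap ℤ (𝓞 K) ((p : ℕ) : ℤ) := by simp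
    rw [h1, Algebra.norm_algebraMap_of_basis b, hcι]
    simp [Int.natAbs_pow]
  have hPtop : P ≠ ⊤ := hP.ne_top
  have habsP : Ideal.absNorm P = p := by
    have hd : Ideal.absNorm P ^ n ∣ p ^ n := by
      have h2 := Ideal.absNorm_dvd_absNorm_of_le hspan
      rwa [habs_p, map_pow] at h2
    have hd1 : Ideal.absNorm P ∣ p ^ n := dvd_trans (dvd_pow_self _ hn0.ne') hd
    obtain ⟨k, hk, hkeq⟩ := (Nat.dvd_prime_pow hp).mp hd1
    have hk1 : k ≤ 1 := by
      by_contra hk2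
      push_neg at hk2
      have h3 : p ^ (k * n) ∣ p ^ n := by rwa [hkeq, ← pow_mul] at hd
      have h4 := (Nat.pow_dvd_pow_iff_le_right hp.one_lt).mp h3
      nlinarith
    interval_cases k
    · rw [pow_zero] at hkeq
      exact absurd (Ideal.absNorm_eq_one_iff.mp hkeq) hPtop
    · rwa [pow_one] at hkeq
  have hPbot : P ≠ ⊥ := by
    intro h
    rw [h, Ideal.absNorm_bot] at habsP
    exact hp.ne_zero habsP.symm
  -- span p = P ^ n
  have hPn : Ideal.span {(p : (𝓞 K))} = P ^ n := by
    obtain ⟨J, hJ⟩ := (Ideal.dvd_iff_le).mpr hspan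
    have h5 : p ^ n = p ^ n * Ideal.absNorm J := by
      conv_lhs => rw [← habs_p]
      rw [hJ, map_mul, map_pow, habsP]
    have hpn : 0 < p ^ n := pow_pos hp.pos n
    have hJ1 : Ideal.absNorm J = 1 := by nlinarith
    rw [hJ, Ideal.absNorm_eq_one_iff.mp hJ1, Ideal.mul_top]
  -- finiteness and cardinality of residue field
  have hcardF : Nat.card ((𝓞 K) ⧸ P) = p := by
    rw [← habsP, Ideal.absNorm_apply, Submodule.cardQuot_apply]
  have hFin : Finite ((𝓞 K) ⧸ P) :=
    Nat.finite_of_card_ne_zero (by rw [hcardF]; exact hp.ne_zero)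
  -- residue field is the prime field
  have hsurj : ∀ y : (𝓞 K) ⧸ P, ∃ m : ℤ, Ideal.Quotient.mk P ((m : ℤ) : (𝓞 K)) = y := by
    have h1 : addOrderOf (1 : (𝓞 K) ⧸ P) = p := by
      have hdvd : addOrderOf (1 : (𝓞 K) ⧸ P) ∣ p := hcardF ▸ addOrderOf_dvd_natCard _
      rcases (Nat.dvd_prime hp).mp hdvd with h | h
      · exact absurd (AddMonoid.addOrderOf_eq_one_iff.mp h) one_ne_zero
      · exact h
    have htop : AddSubgroup.zmultiples (1 : (𝓞 K) ⧸ P) = ⊤ := by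
      apply AddSubgroup.eq_top_of_card_eq
      rw [Nat.card_zmultiples, h1, hcardF]
    intro y
    have hy : y ∈ AddSubgroup.zmultiples (1 : (𝓞 K) ⧸ P) := htop ▸ AddSubgroup.mem_top y
    obtain ⟨m, hm⟩ := AddSubgroup.mem_zmultiples_iff.mp hy
    refine ⟨m, ?_⟩
    rw [map_intCast, ← hm]
    simp [zsmul_eq_mul]
  -- the key congruence : norm x ≡ c ^ n mod p
  have key : ∀ x : (𝓞 K), ∀ c : ℤ, x - (c : (𝓞 K)) ∈ P →
      ((Algebra.norm ℤ x : ℤ) : ZMod p) = ((c : ZMod p)) ^ n := by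
    intro x c hxc
    have hmemx : (x - (c : (𝓞 K))) ^ n ∈ Ideal.span {(p : (𝓞 K))} := by
      rw [hPn]; exact Ideal.pow_mem_pow hxc n
    obtain ⟨w, hw⟩ := Ideal.mem_span_singleton'.mp hmemx
    have hk := key_aux_stmt12 p hp x c ⟨w, by rw [hrank]; exact hw⟩
    rwa [hrank] at hk
  -- every unit has image of order dividing 2n
  have hunit2n : ∀ ε : (𝓞 K)ˣ, (Ideal.Quotient.mk P ((ε : (𝓞 K)))) ^ (2 * n) = 1 := by
    intro ε
    obtain ⟨m, hm⟩ := hsurj (Ideal.Quotient.mk P ((ε : (𝓞 K))))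
    have hmem : (ε : (𝓞 K)) - (m : (𝓞 K)) ∈ P := Ideal.Quotient.eq.mp hm.symm
    have hkey := key ((ε : (𝓞 K))) m hmem
    have hu : IsUnit (Algebra.norm ℤ ((ε : (𝓞 K)))) := (ε.isUnit).map (Algebra.norm ℤ)
    have hpow : ((m : ZMod p)) ^ (2 * n) = 1 := by
      have hsq : (((m : ZMod p)) ^ n) ^ 2 = 1 := by
        rw [← hkey]
        rcases Int.isUnit_iff.mp hu with h1 | h1 <;> rw [h1] <;> norm_num
      calc ((m : ZMod p)) ^ (2 * n) = (((m : ZMod p)) ^ n) ^ 2 := by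
            rw [← pow_mul, mul_comm]
        _ = 1 := hsq
    have hdvd : (p : ℤ) ∣ m ^ (2 * n) - 1 := by
      have h6 : ((m ^ (2 * n) - 1 : ℤ) : ZMod p) = 0 := by
        push_cast
        rw [hpow]
        ring
      exact (ZMod.intCast_zmod_eq_zero_iff_dvd _ _).mp h6
    obtain ⟨t, ht⟩ := hdvd
    have h7 : ((m : ℤ) : (𝓞 K)) ^ (2 * n) = 1 + ((p : ℕ) : (𝓞 K)) * ((t : ℤ) : (𝓞 K)) := by
      have h8 : (m : ℤ) ^ (2 * n) = 1 + ((p : ℕ) : ℤ) * t := by linarith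
      calc ((m : ℤ) : (𝓞 K)) ^ (2 * n) = (((m : ℤ) ^ (2 * n) : ℤ) : (𝓞 K)) := by push_cast; ring
        _ = ((1 + ((p : ℕ) : ℤ) * t : ℤ) : (𝓞 K)) := by rw [h8]
        _ = 1 + ((p : ℕ) : (𝓞 K)) * ((t : ℤ) : (𝓞 K)) := by push_cast; ring
    rw [← hm, ← map_pow, h7, map_add, map_mul, map_one,
      Ideal.Quotient.eq_zero_iff_mem.mpr hPp, zero_mul, add_zero]
  -- bound on the image of the units
  have hS1 : Nat.card (Set.range (fun ε : (𝓞 K)ˣ => Ideal.Quotient.mk P ((ε : (𝓞 K))))) ≤ 2 * n := by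
    have h2n0 : 0 < 2 * n := by omega
    have hsub : Set.range (fun ε : (𝓞 K)ˣ => Ideal.Quotient.mk P ((ε : (𝓞 K))))
        ⊆ ↑((Polynomial.nthRoots (2 * n) (1 : (𝓞 K) ⧸ P)).toFinset) := by
      rintro y ⟨ε, rfl⟩
      simp only [Finset.coe_sort_coe, Finset.mem_coe, Multiset.mem_toFinset]
      rw [Polynomial.mem_nthRoots h2n0]
      exact hunit2n ε
    calc Nat.card (Set.range (fun ε : (𝓞 K)ˣ => Ideal.Quotient.mk P ((ε : (𝓞 K)))))
        ≤ Nat.card (↑((Polynomial.nthRoots (2 * n) (1 : (𝓞 K) ⧸ P)).toFinset) : Set ((𝓞 K) ⧸ P)) :=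
          Nat.card_mono (Finset.finite_toSet _) hsub
      _ = ((Polynomial.nthRoots (2 * n) (1 : (𝓞 K) ⧸ P)).toFinset).card := by
          rw [Nat.card_coe_set_eq, Set.ncard_coe_finset]
      _ ≤ Multiset.card (Polynomial.nthRoots (2 * n) (1 : (𝓞 K) ⧸ P)) :=
          Multiset.toFinset_card_le _
      _ ≤ 2 * n := Polynomial.card_nthRoots _ _
  refine ⟨hS1, ?_⟩
  -- part 2
  intro α π hπ
  have hπ0 : π ≠ 0 := by
    intro h
    rw [h] at hπ
    rw [Ideal.span_singleton_eq_bot.mpr rfl] at hπ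
    exact hPbot hπ.symm
  have hπK : (π : K) ≠ 0 := RingOfIntegers.coe_ne_zero_iff.mpr hπ0
  have hg : ∀ t : {c : K ⧸ ((algebraMap (𝓞 K) K).toAddMonoidHom.range) |
        ∃ ε : (𝓞 K)ˣ, c = QuotientAddGroup.mk ((ε : K) * ((α : K) / (π : K)))},
      ∃ ε : (𝓞 K)ˣ, (t : K ⧸ ((algebraMap (𝓞 K) K).toAddMonoidHom.range))
        = QuotientAddGroup.mk ((ε : K) * ((α : K) / (π : K))) :=
    fun t => t.2
  choose g hgspec using hg
  set S2 := Set.range (fun ε : (𝓞 K)ˣ => Ideal.Quotient.mk P ((ε : 𝓞 K) * α)) with hS2def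
  let G : {c : K ⧸ ((algebraMap (𝓞 K) K).toAddMonoidHom.range) |
        ∃ ε : (𝓞 K)ˣ, c = QuotientAddGroup.mk ((ε : K) * ((α : K) / (π : K)))} → S2 :=
    fun t => ⟨Ideal.Quotient.mk P ((g t : 𝓞 K) * α), ⟨g t, rfl⟩⟩
  have hGinj : Function.Injective G := by
    intro t1 t2 h12
    have h13 : Ideal.Quotient.mk P ((g t1 : 𝓞 K) * α) = Ideal.Quotient.mk P ((g t2 : 𝓞 K) * α) :=
      congrArg Subtype.val h12
    have h14 : (g t1 : 𝓞 K) * α - (g t2 : 𝓞 K) * α ∈ P := Ideal.Quotient.eq.mp h13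
    rw [← hπ] at h14
    obtain ⟨w, hw⟩ := Ideal.mem_span_singleton'.mp h14
    have hwK : (w : K) * (π : K) = ((g t1 : 𝓞 K) : K) * (α : K) - ((g t2 : 𝓞 K) : K) * (α : K) := by
      calc (w : K) * (π : K) = ((w * π : 𝓞 K) : K) := by push_cast; ring
        _ = (((g t1 : 𝓞 K) * α - (g t2 : 𝓞 K) * α : 𝓞 K) : K) := by rw [hw]
        _ = _ := by push_cast; ring
    apply Subtype.ext
    rw [hgspec t1, hgspec t2, QuotientAddGroup.eq]
    refine ⟨-w, ?_⟩
    show algebraMap (𝓞 K) K (-w) = _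
    have hneg : (algebraMap (𝓞 K) K) (-w) = -(w : K) := by push_cast; ring
    rw [hneg]
    have h1 : (-(((g t1 : 𝓞 K) : K)  * ((α : K) / (π : K))) + ((g t2 : 𝓞 K) : K) * ((α : K) / (π : K)))
        = (((g t2 : 𝓞 K) : K) * (α : K) - ((g t1 : 𝓞 K) : K) * (α : K)) / (π : K) := by
      ring
    have h2 : (((g t2 : 𝓞 K) : K) * (α : K) - ((g t1 : 𝓞 K) : K) * (α : K)) = -((w : K) * (π : K)) := by
      linear_combination hwK
    rw [h1, h2, neg_div, mul_div_cancel_right₀ _ hπK]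
  have hcard2 : Nat.card {c : K ⧸ ((algebraMap (𝓞 K) K).toAddMonoidHom.range) |
        ∃ ε : (𝓞 K)ˣ, c = QuotientAddGroup.mk ((ε : K) * ((α : K) / (π : K)))}
      ≤ Nat.card S2 :=
    Nat.card_le_card_of_injective G hGinj
  have hS2im : S2 = (fun y => y * Ideal.Quotient.mk P α) ''
      (Set.range fun ε : (𝓞 K)ˣ => Ideal.Quotient.mk P (ε : 𝓞 K)) := by
    rw [hS2def, show (fun ε : (𝓞 K)ˣ => Ideal.Quotient.mk P ((ε : 𝓞 K) * α))
        = (fun y => y * Ideal.Quotient.mk P α)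
          ∘ (fun ε : (𝓞 K)ˣ => Ideal.Quotient.mk P (ε : 𝓞 K)) from
      funext fun ε => by simp [map_mul], Set.range_comp]
  refine le_trans hcard2 (le_trans ?_ hS1)
  rw [hS2im]
  exact Nat.card_image_le (Set.toFinite _)
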